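/- Let (x^i)_{i∈ℕ} and (z^i)_{i∈ℕ} be mutually independent families of i.i.d. real random variables with mean zero and finite positive variance (not necessarily Gaussian), and set v^i = x^i + z^i. Let R > 0 and Q ≥ 0 and define, for a sequence of Borel measurable policies γ = (γ^i : ℝ → ℝ)_{i∈ℕ}, J(γ) = limsup_{N→∞} (1/N) E[ Σ_{i=1}^N R·γ^i(v^i)² + Q·(γ^i(v^i) − x^i − (1/N)Σ_{k=1}^N x^k)² ]. Let φ : ℝ → ℝ be a Borel measurable function with φ(v¹) = E[x¹ | v¹] ℙ-a.s. Then the identical policy γ*(v) = (Q/(R+Q))·φ(v) is globally team optimal: J(γ*, γ*, …) = inf over all policy sequences γ of J(γ). -/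

import Mathlib

open MeasureTheory Filter ENNReal NNReal ProbabilityTheory Topology

/-- The `N`-decision-maker expected cost
`J_N(γ) = (1/N) E[ Σ_{i<N} R γ^i(v^i)² + Q (γ^i(v^i) − x^i − (1/N) Σ_{k<N} x^k)² ]`
with observations `v^i = x^i + z^i`, valued in `ℝ≥0∞`. -/
noncomputable def lqCostN {Ω : Type*} [MeasurableSpace Ω] (P : Measure Ω)
    (x z : ℕ → Ω → ℝ) (R Q : ℝ) (γ : ℕ → ℝ → ℝ) (N : ℕ) : ℝ≥0∞ :=
  (N : ℝ≥0∞)⁻¹ * ∫⁻ ω, ENNReal.ofReal (∑ i ∈ Finset.range N,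
    (R * (γ i (x i ω + z i ω)) ^ 2 +
      Q * (γ i (x i ω + z i ω) - x i ω - (N : ℝ)⁻¹ * ∑ k ∈ Finset.range N, x k ω) ^ 2)) ∂P

/-- The infinite-team cost `J(γ) = limsup_{N→∞} J_N(γ)`. -/
noncomputable def lqCost {Ω : Type*} [MeasurableSpace Ω] (P : Measure Ω)
    (x z : ℕ → Ω → ℝ) (R Q : ℝ) (γ : ℕ → ℝ → ℝ) : ℝ≥0∞ :=
  Filter.limsup (lqCostN P x z R Q γ) Filter.atTop

lemma aux_mul_integrable {Ω : Type*} [MeasurableSpace Ω] {P : Measure Ω} {f g : Ω → ℝ}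
    (hf : MemLp f 2 P) (hg : MemLp g 2 P) :
    Integrable (fun ω => f ω * g ω) P := by
  have h : MemLp (g • f) 1 P := hf.smul hg
  rw [memLp_one_iff_integrable] at h
  exact (by simpa [smul_eq_mul, mul_comm] using h : Integrable (f * g) P)

lemma aux_condexp_memℒp {Ω : Type*} {m : MeasurableSpace Ω} {m0 : MeasurableSpace Ω}
    {P : Measure Ω} [IsProbabilityMeasure P] (hm : m ≤ m0) {f : Ω → ℝ} (hf : MemLp f 2 P) :
    MemLp (P[f|m]) 2 P := by
  haveI := isFiniteMeasure_trim (μ := P) hm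
  set F := hf.toLp f with hF
  have hae : (↑(condExpL2 ℝ ℝ hm F) : Ω → ℝ) =ᵐ[P] P[f|m] := by
    refine ae_eq_condExp_of_forall_setIntegral_eq hm (hf.integrable one_le_two)
      (fun s _ _ => (integrable_condExpL2_of_isFiniteMeasure hm).integrableOn)
      (fun s hs hμs => ?_) (aestronglyMeasurable_condExpL2 hm F)
    rw [integral_condExpL2_eq hm F hs hμs.ne]
    exact setIntegral_congr_ae (hm s hs) ((hf.coeFn_toLp).mono fun ω hω _ => hω)
  exact (Lp.memLp _).ae_eq hae

lemma aux_pullout {Ω : Type*} {m0 : MeasurableSpace Ω} {P : Measure Ω}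
    [IsProbabilityMeasure P] {v xx : Ω → ℝ} (hv : Measurable v)
    (hxx2 : MemLp xx 2 P) {φ g : ℝ → ℝ}
    (hφ : (fun ω => φ (v ω)) =ᵐ[P] P[xx|MeasurableSpace.comap v Real.measurableSpace])
    (hg : Measurable g) (hgv : MemLp (fun ω => g (v ω)) 2 P) :
    ∫ ω, g (v ω) * xx ω ∂P = ∫ ω, g (v ω) * φ (v ω) ∂P := by
  have hm : MeasurableSpace.comap v Real.measurableSpace ≤ m0 := hv.comap_le
  haveI := isFiniteMeasure_trim (μ := P) hm
  have hsm : StronglyMeasurable[MeasurableSpace.comap v Real.measurableSpace]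
      (fun ω => g (v ω)) := by
    have hvm : Measurable[MeasurableSpace.comap v Real.measurableSpace] v :=
      measurable_iff_comap_le.mpr le_rfl
    exact (hg.comp hvm).stronglyMeasurable
  have hmul : Integrable ((fun ω => g (v ω)) * xx) P := aux_mul_integrable hgv hxx2
  have h1 : P[(fun ω => g (v ω)) * xx|MeasurableSpace.comap v Real.measurableSpace]
      =ᵐ[P] (fun ω => g (v ω)) * P[xx|MeasurableSpace.comap v Real.measurableSpace] :=
    condExp_mul_of_stronglyMeasurable_left hsm hmul (hxx2.integrable one_le_two)
  have h2 : ∫ ω, ((fun ω => g (v ω)) * xx) ω ∂P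
      = ∫ ω, ((fun ω => g (v ω)) * P[xx|MeasurableSpace.comap v Real.measurableSpace]) ω ∂P := by
    rw [← integral_condExp (μ := P) (f := (fun ω => g (v ω)) * xx) hm]
    exact integral_congr_ae h1
  refine Eq.trans (show _ from h2) (integral_congr_ae (hφ.mono fun ω hω => ?_))
  exact congrArg (fun t => g (v ω) * t) hω.symm

set_option maxHeartbeats 1000000 in
theorem stmt14 {Ω : Type*} [MeasurableSpace Ω] (P : Measure Ω) [IsProbabilityMeasure P]
    (x z : ℕ → Ω → ℝ)
    (hx_meas : ∀ i, Measurable (x i)) (hz_meas : ∀ i, Measurable (z i))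
    -- `(x^i)` and `(z^i)` are i.i.d. families, mutually independent
    (hx_ident : ∀ i, Measure.map (x i) P = Measure.map (x 0) P)
    (hz_ident : ∀ i, Measure.map (z i) P = Measure.map (z 0) P)
    (hindep : iIndepFun (Sum.elim x z) P)
    -- mean zero, finite positive variance
    (hx_int : Integrable (x 0) P) (hz_int : Integrable (z 0) P)
    (hx_mean : ∫ ω, x 0 ω ∂P = 0) (hz_mean : ∫ ω, z 0 ω ∂P = 0)
    (hx_sq : Integrable (fun ω => (x 0 ω) ^ 2) P)
    (hz_sq : Integrable (fun ω => (z 0 ω) ^ 2) P)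
    (hx_var : 0 < ∫ ω, (x 0 ω) ^ 2 ∂P) (hz_var : 0 < ∫ ω, (z 0 ω) ^ 2 ∂P)
    (R Q : ℝ) (hR : 0 < R) (hQ : 0 ≤ Q)
    -- `φ` is a Borel version of the conditional expectation `E[x¹ | v¹]`
    (φ : ℝ → ℝ) (hφ_meas : Measurable φ)
    (hφ : (fun ω => φ (x 0 ω + z 0 ω)) =ᵐ[P]
      P[x 0|MeasurableSpace.comap (fun ω => x 0 ω + z 0 ω) Real.measurableSpace]) :
    -- then the identical policy `γ*(v) = (Q/(R+Q))·φ(v)` is globally team optimal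
    lqCost P x z R Q (fun _ => fun vv => (Q / (R + Q)) * φ vv) =
      ⨅ γ : {γ : ℕ → ℝ → ℝ // ∀ i, Measurable (γ i)}, lqCost P x z R Q γ.1 := by
  have hRQ : (0:ℝ) < R + Q := by linarith
  -- basic transfer infrastructure
  have hfmeas : ∀ j : ℕ ⊕ ℕ, Measurable (Sum.elim x z j) := by
    rintro (i | i)
    exacts [hx_meas i, hz_meas i]
  have hpair_meas : ∀ i, Measurable fun ω => (x i ω, z i ω) :=
    fun i => (hx_meas i).prodMk (hz_meas i)
  have hpair_law : ∀ i, P.map (fun ω => (x i ω, z i ω)) = P.map (fun ω => (x 0 ω, z 0 ω)) := by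
    intro i
    have hixz : IndepFun (x i) (z i) P :=
      hindep.indepFun (show (Sum.inl i : ℕ ⊕ ℕ) ≠ Sum.inr i by simp)
    have h0xz : IndepFun (x 0) (z 0) P :=
      hindep.indepFun (show (Sum.inl 0 : ℕ ⊕ ℕ) ≠ Sum.inr 0 by simp)
    rw [(indepFun_iff_map_prod_eq_prod_map_map (hx_meas i).aemeasurable
        (hz_meas i).aemeasurable).mp hixz, hx_ident i, hz_ident i,
      ← (indepFun_iff_map_prod_eq_prod_map_map (hx_meas 0).aemeasurable
        (hz_meas 0).aemeasurable).mp h0xz]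
  have hT : ∀ (i) (F : ℝ × ℝ → ℝ), Measurable F →
      ∫ ω, F (x i ω, z i ω) ∂P = ∫ ω, F (x 0 ω, z 0 ω) ∂P := by
    intro i F hF
    rw [← integral_map (hpair_meas i).aemeasurable hF.aestronglyMeasurable, hpair_law i,
      integral_map (hpair_meas 0).aemeasurable hF.aestronglyMeasurable]
  have hTL : ∀ (i) (F : ℝ × ℝ → ℝ), Measurable F →
      MemLp (fun ω => F (x 0 ω, z 0 ω)) 2 P → MemLp (fun ω => F (x i ω, z i ω)) 2 P := by
    intro i F hF h0
    have h1 : MemLp F 2 (P.map (fun ω => (x 0 ω, z 0 ω))) :=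
      (memLp_map_measure_iff hF.aestronglyMeasurable (hpair_meas 0).aemeasurable).mpr h0
    rw [← hpair_law i] at h1
    exact (memLp_map_measure_iff hF.aestronglyMeasurable (hpair_meas i).aemeasurable).mp h1
  have hTlint : ∀ (i) (F : ℝ × ℝ → ℝ≥0∞), Measurable F →
      ∫⁻ ω, F (x i ω, z i ω) ∂P = ∫⁻ ω, F (x 0 ω, z 0 ω) ∂P := by
    intro i F hF
    rw [← lintegral_map hF (hpair_meas i), hpair_law i, lintegral_map hF (hpair_meas 0)]
  have hxmean : ∀ k, ∫ ω, x k ω ∂P = 0 :=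
    fun k => (hT k (fun p => p.1) measurable_fst).trans hx_mean
  have hindep2 : ∀ (g : ℝ → ℝ), Measurable g → ∀ i k, i ≠ k →
      ∫ ω, g (x i ω + z i ω) * x k ω ∂P = 0 := by
    intro g hg i k hik
    have hind0 : IndepFun (fun ω => (x i ω, z i ω)) (x k) P :=
      hindep.indepFun_prodMk hfmeas (Sum.inl i) (Sum.inr i) (Sum.inl k)
        (by simp [hik]) (by simp)
    have hind : IndepFun (fun ω => g (x i ω + z i ω)) (x k) P :=
      hind0.comp (φ := fun p : ℝ × ℝ => g (p.1 + p.2)) (ψ := id)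
        (hg.comp (measurable_fst.add measurable_snd)) measurable_id
    calc ∫ ω, g (x i ω + z i ω) * x k ω ∂P
        = (∫ ω, g (x i ω + z i ω) ∂P) * ∫ ω, x k ω ∂P :=
          hind.integral_mul_eq_mul_integral
            ((hg.comp ((hx_meas i).add (hz_meas i))).aestronglyMeasurable)
            (hx_meas k).aestronglyMeasurable
      _ = 0 := by rw [hxmean k, mul_zero]
  have hxx0 : ∀ j k, j ≠ k → ∫ ω, x j ω * x k ω ∂P = 0 := by
    intro j k hjk
    have hind : IndepFun (x j) (x k) P :=
      hindep.indepFun (show (Sum.inl j : ℕ ⊕ ℕ) ≠ Sum.inl k by simpa using hjk)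
    calc ∫ ω, x j ω * x k ω ∂P = (∫ ω, x j ω ∂P) * ∫ ω, x k ω ∂P :=
          hind.integral_mul_eq_mul_integral (hx_meas j).aestronglyMeasurable (hx_meas k).aestronglyMeasurable
      _ = 0 := by rw [hxmean k, mul_zero]
  have hx0L2 : MemLp (x 0) 2 P :=
    (memLp_two_iff_integrable_sq (hx_meas 0).aestronglyMeasurable).mpr hx_sq
  have hxL2 : ∀ k, MemLp (x k) 2 P := fun k => hTL k (fun p => p.1) measurable_fst hx0L2
  have hxsq : ∀ k, Integrable (fun ω => (x k ω) ^ 2) P :=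
    fun k => (memLp_two_iff_integrable_sq (hxL2 k).aestronglyMeasurable).mp (hxL2 k)
  have hxxint : ∀ j k, Integrable (fun ω => x j ω * x k ω) P :=
    fun j k => aux_mul_integrable (hxL2 j) (hxL2 k)
  -- conditional expectation facts
  have hφL2 : MemLp (fun ω => φ (x 0 ω + z 0 ω)) 2 P :=
    (aux_condexp_memℒp (((hx_meas 0).add (hz_meas 0)).comap_le) hx0L2).ae_eq hφ.symm
  have hφsq : Integrable (fun ω => (φ (x 0 ω + z 0 ω)) ^ 2) P :=
    (memLp_two_iff_integrable_sq hφL2.aestronglyMeasurable).mp hφL2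
  have hpull : ∀ (g : ℝ → ℝ), Measurable g → MemLp (fun ω => g (x 0 ω + z 0 ω)) 2 P →
      ∫ ω, g (x 0 ω + z 0 ω) * x 0 ω ∂P
        = ∫ ω, g (x 0 ω + z 0 ω) * φ (x 0 ω + z 0 ω) ∂P :=
    fun g hgm hg2 => aux_pullout ((hx_meas 0).add (hz_meas 0)) hx0L2 hφ hgm hg2
  have hBφ : ∫ ω, φ (x 0 ω + z 0 ω) * x 0 ω ∂P = ∫ ω, (φ (x 0 ω + z 0 ω)) ^ 2 ∂P := by
    rw [hpull φ hφ_meas hφL2]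
    congr 1
    funext ω
    rw [pow_two]
  have hquad : ∀ (g : ℝ → ℝ), Measurable g → MemLp (fun ω => g (x 0 ω + z 0 ω)) 2 P →
      ∀ t : ℝ, 0 ≤ (∫ ω, (g (x 0 ω + z 0 ω)) ^ 2 ∂P)
        - 2 * t * (∫ ω, g (x 0 ω + z 0 ω) * φ (x 0 ω + z 0 ω) ∂P)
        + t ^ 2 * ∫ ω, (φ (x 0 ω + z 0 ω)) ^ 2 ∂P := by
    intro g hgm hg2 t
    have hgsq : Integrable (fun ω => (g (x 0 ω + z 0 ω)) ^ 2) P :=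
      (memLp_two_iff_integrable_sq hg2.aestronglyMeasurable).mp hg2
    have hgφ : Integrable (fun ω => g (x 0 ω + z 0 ω) * φ (x 0 ω + z 0 ω)) P :=
      aux_mul_integrable hg2 hφL2
    have h0 : 0 ≤ ∫ ω, (g (x 0 ω + z 0 ω) - t * φ (x 0 ω + z 0 ω)) ^ 2 ∂P :=
      integral_nonneg fun ω => sq_nonneg _
    have hrw : (fun ω => (g (x 0 ω + z 0 ω) - t * φ (x 0 ω + z 0 ω)) ^ 2)
        = fun ω => ((g (x 0 ω + z 0 ω)) ^ 2
            - 2 * t * (g (x 0 ω + z 0 ω) * φ (x 0 ω + z 0 ω)))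
          + t ^ 2 * (φ (x 0 ω + z 0 ω)) ^ 2 := by
      funext ω; ring
    have hsub : Integrable (fun ω => (g (x 0 ω + z 0 ω)) ^ 2
        - 2 * t * (g (x 0 ω + z 0 ω) * φ (x 0 ω + z 0 ω))) P :=
      hgsq.sub (hgφ.const_mul _)
    rw [hrw, integral_add hsub (hφsq.const_mul _), integral_sub hgsq (hgφ.const_mul _),
      integral_const_mul, integral_const_mul] at h0
    exact h0
  -- the per-decision-maker term computation
  have hterm : ∀ (g : ℝ → ℝ), Measurable g → MemLp (fun ω => g (x 0 ω + z 0 ω)) 2 P →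
      ∀ N i, i < N →
      Integrable (fun ω => R * (g (x i ω + z i ω)) ^ 2 +
        Q * (g (x i ω + z i ω) - x i ω - (N : ℝ)⁻¹ * ∑ k ∈ Finset.range N, x k ω) ^ 2) P ∧
      ∫ ω, (R * (g (x i ω + z i ω)) ^ 2 +
          Q * (g (x i ω + z i ω) - x i ω - (N : ℝ)⁻¹ * ∑ k ∈ Finset.range N, x k ω) ^ 2) ∂P
        = (R + Q) * (∫ ω, (g (x 0 ω + z 0 ω)) ^ 2 ∂P)
          - 2 * Q * (1 + (N : ℝ)⁻¹) * (∫ ω, g (x 0 ω + z 0 ω) * x 0 ω ∂P)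
          + Q * (1 + 3 * (N : ℝ)⁻¹) * (∫ ω, (x 0 ω) ^ 2 ∂P) := by
    intro g hg hg2 N i hiN
    have hNpos : 0 < N := lt_of_le_of_lt (Nat.zero_le _) hiN
    have hN0 : (N : ℝ) ≠ 0 := Nat.cast_ne_zero.mpr hNpos.ne'
    have hui : MemLp (fun ω => g (x i ω + z i ω)) 2 P :=
      hTL i (fun p => g (p.1 + p.2)) (hg.comp (measurable_fst.add measurable_snd)) hg2
    have hu_sq : Integrable (fun ω => (g (x i ω + z i ω)) ^ 2) P :=
      (memLp_two_iff_integrable_sq hui.aestronglyMeasurable).mp hui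
    have hux : ∀ k, Integrable (fun ω => g (x i ω + z i ω) * x k ω) P :=
      fun k => aux_mul_integrable hui (hxL2 k)
    have hpt : (fun ω => R * (g (x i ω + z i ω)) ^ 2 +
        Q * (g (x i ω + z i ω) - x i ω - (N : ℝ)⁻¹ * ∑ k ∈ Finset.range N, x k ω) ^ 2)
        = fun ω => ((R + Q) * (g (x i ω + z i ω)) ^ 2 + Q * (x i ω) ^ 2
            + Q * ((N : ℝ)⁻¹) ^ 2 *
              ∑ j ∈ Finset.range N, ∑ k ∈ Finset.range N, x j ω * x k ω)
          - (2 * Q * (g (x i ω + z i ω) * x i ω)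
            + 2 * Q * (N : ℝ)⁻¹ * ∑ k ∈ Finset.range N, g (x i ω + z i ω) * x k ω)
          + 2 * Q * (N : ℝ)⁻¹ * ∑ k ∈ Finset.range N, x i ω * x k ω := by
      funext ω
      rw [← Finset.sum_mul_sum, ← Finset.mul_sum, ← Finset.mul_sum]
      ring
    have hI1 : Integrable (fun ω => (R + Q) * (g (x i ω + z i ω)) ^ 2 + Q * (x i ω) ^ 2
        + Q * ((N : ℝ)⁻¹) ^ 2 *
          ∑ j ∈ Finset.range N, ∑ k ∈ Finset.range N, x j ω * x k ω) P :=
      ((hu_sq.const_mul _).add ((hxsq i).const_mul _)).add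
        ((integrable_finset_sum _ fun j _ =>
          integrable_finset_sum _ fun k _ => hxxint j k).const_mul _)
    have hI2 : Integrable (fun ω => 2 * Q * (g (x i ω + z i ω) * x i ω)
        + 2 * Q * (N : ℝ)⁻¹ * ∑ k ∈ Finset.range N, g (x i ω + z i ω) * x k ω) P :=
      ((hux i).const_mul _).add
        ((integrable_finset_sum _ fun k _ => hux k).const_mul _)
    have hI3 : Integrable
        (fun ω => 2 * Q * (N : ℝ)⁻¹ * ∑ k ∈ Finset.range N, x i ω * x k ω) P :=
      (integrable_finset_sum _ fun k _ => hxxint i k).const_mul _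
    have hIA : Integrable (fun ω => (R + Q) * (g (x i ω + z i ω)) ^ 2 + Q * (x i ω) ^ 2) P :=
      (hu_sq.const_mul _).add ((hxsq i).const_mul _)
    have hI12 : Integrable (fun ω => ((R + Q) * (g (x i ω + z i ω)) ^ 2 + Q * (x i ω) ^ 2
        + Q * ((N : ℝ)⁻¹) ^ 2 * ∑ j ∈ Finset.range N, ∑ k ∈ Finset.range N, x j ω * x k ω)
        - (2 * Q * (g (x i ω + z i ω) * x i ω)
          + 2 * Q * (N : ℝ)⁻¹ * ∑ k ∈ Finset.range N, g (x i ω + z i ω) * x k ω)) P :=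
      hI1.sub hI2
    constructor
    · rw [hpt]; exact hI12.add hI3
    rw [hpt, integral_add hI12 hI3, integral_sub hI1 hI2,
      integral_add hIA ((integrable_finset_sum _ fun j _ =>
        integrable_finset_sum _ fun k _ => hxxint j k).const_mul _),
      integral_add (hu_sq.const_mul _) ((hxsq i).const_mul _),
      integral_add ((hux i).const_mul _)
        ((integrable_finset_sum _ fun k _ => hux k).const_mul _)]
    rw [integral_const_mul, integral_const_mul, integral_const_mul, integral_const_mul,
      integral_const_mul, integral_const_mul]
    rw [integral_finset_sum _ (fun j _ =>
        integrable_finset_sum _ fun k _ => hxxint j k),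
      integral_finset_sum _ (fun k _ => hux k),
      integral_finset_sum _ (fun k _ => hxxint i k)]
    have hdiag : ∀ j, ∫ ω, x j ω * x j ω ∂P = ∫ ω, (x 0 ω) ^ 2 ∂P := by
      intro j
      have := hT j (fun p => p.1 * p.1) (measurable_fst.mul measurable_fst)
      rw [this]
      congr 1; funext ω; ring
    have hsum1 : ∑ j ∈ Finset.range N, ∑ k ∈ Finset.range N, ∫ ω, x j ω * x k ω ∂P
        = (N : ℝ) * ∫ ω, (x 0 ω) ^ 2 ∂P := by
      have h : ∀ j ∈ Finset.range N, ∑ k ∈ Finset.range N, ∫ ω, x j ω * x k ω ∂P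
          = ∫ ω, (x 0 ω) ^ 2 ∂P := by
        intro j hj
        rw [Finset.sum_eq_single_of_mem j hj (fun k _ hkj => hxx0 j k (Ne.symm hkj))]
        exact hdiag j
      rw [Finset.sum_congr rfl h, Finset.sum_const, Finset.card_range, nsmul_eq_mul]
    have hsum2 : ∑ k ∈ Finset.range N, ∫ ω, g (x i ω + z i ω) * x k ω ∂P
        = ∫ ω, g (x 0 ω + z 0 ω) * x 0 ω ∂P := by
      rw [Finset.sum_eq_single_of_mem i (Finset.mem_range.mpr hiN)
        (fun k _ hki => hindep2 g hg i k (Ne.symm hki))]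
      exact hT i (fun p => g (p.1 + p.2) * p.1)
        ((hg.comp (measurable_fst.add measurable_snd)).mul measurable_fst)
    have hsum3 : ∑ k ∈ Finset.range N, ∫ ω, x i ω * x k ω ∂P = ∫ ω, (x 0 ω) ^ 2 ∂P := by
      rw [Finset.sum_eq_single_of_mem i (Finset.mem_range.mpr hiN)
        (fun k _ hki => hxx0 i k (Ne.symm hki))]
      exact hdiag i
    have hu2v : ∫ ω, (g (x i ω + z i ω)) ^ 2 ∂P = ∫ ω, (g (x 0 ω + z 0 ω)) ^ 2 ∂P :=
      hT i (fun p => (g (p.1 + p.2)) ^ 2)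
        ((hg.comp (measurable_fst.add measurable_snd)).pow_const 2)
    have hx2v : ∫ ω, (x i ω) ^ 2 ∂P = ∫ ω, (x 0 ω) ^ 2 ∂P :=
      hT i (fun p => p.1 ^ 2) (measurable_fst.pow_const 2)
    have huxv : ∫ ω, g (x i ω + z i ω) * x i ω ∂P = ∫ ω, g (x 0 ω + z 0 ω) * x 0 ω ∂P :=
      hT i (fun p => g (p.1 + p.2) * p.1)
        ((hg.comp (measurable_fst.add measurable_snd)).mul measurable_fst)
    rw [Finset.sum_congr rfl (fun j _ => integral_finset_sum _ (fun k _ => hxxint j k))]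
    rw [hsum1, hsum2, hsum3, hu2v, hx2v, huxv]
    field_simp
    ring
  -- evaluation of `lqCostN` for square-integrable policies
  have hJN : ∀ (γ : ℕ → ℝ → ℝ), (∀ i, Measurable (γ i)) →
      (∀ i, MemLp (fun ω => γ i (x 0 ω + z 0 ω)) 2 P) → ∀ N, 0 < N →
      lqCostN P x z R Q γ N = ENNReal.ofReal ((N : ℝ)⁻¹ * ∑ i ∈ Finset.range N,
        ((R + Q) * (∫ ω, (γ i (x 0 ω + z 0 ω)) ^ 2 ∂P)
          - 2 * Q * (1 + (N : ℝ)⁻¹) * (∫ ω, γ i (x 0 ω + z 0 ω) * x 0 ω ∂P)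
          + Q * (1 + 3 * (N : ℝ)⁻¹) * (∫ ω, (x 0 ω) ^ 2 ∂P))) := by
    intro γ hγm hγ2 N hN
    have hti := fun i (hi : i ∈ Finset.range N) =>
      hterm (γ i) (hγm i) (hγ2 i) N i (Finset.mem_range.mp hi)
    have hIntSum : Integrable (fun ω => ∑ i ∈ Finset.range N,
        (R * (γ i (x i ω + z i ω)) ^ 2 +
          Q * (γ i (x i ω + z i ω) - x i ω
            - (N : ℝ)⁻¹ * ∑ k ∈ Finset.range N, x k ω) ^ 2)) P :=
      integrable_finset_sum _ fun i hi => (hti i hi).1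
    have hnn : 0 ≤ᵐ[P] (fun ω => ∑ i ∈ Finset.range N,
        (R * (γ i (x i ω + z i ω)) ^ 2 +
          Q * (γ i (x i ω + z i ω) - x i ω
            - (N : ℝ)⁻¹ * ∑ k ∈ Finset.range N, x k ω) ^ 2)) :=
      Filter.Eventually.of_forall fun ω => Finset.sum_nonneg fun i _ =>
        add_nonneg (mul_nonneg hR.le (sq_nonneg _)) (mul_nonneg hQ (sq_nonneg _))
    have hval : ∫ ω, (∑ i ∈ Finset.range N,
        (R * (γ i (x i ω + z i ω)) ^ 2 +
          Q * (γ i (x i ω + z i ω) - x i ω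
            - (N : ℝ)⁻¹ * ∑ k ∈ Finset.range N, x k ω) ^ 2)) ∂P
        = ∑ i ∈ Finset.range N,
          ((R + Q) * (∫ ω, (γ i (x 0 ω + z 0 ω)) ^ 2 ∂P)
            - 2 * Q * (1 + (N : ℝ)⁻¹) * (∫ ω, γ i (x 0 ω + z 0 ω) * x 0 ω ∂P)
            + Q * (1 + 3 * (N : ℝ)⁻¹) * (∫ ω, (x 0 ω) ^ 2 ∂P)) := by
      rw [integral_finset_sum _ fun i hi => (hti i hi).1]
      exact Finset.sum_congr rfl fun i hi => (hti i hi).2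
    simp only [lqCostN]
    rw [← ofReal_integral_eq_lintegral_ofReal hIntSum hnn, hval,
      show ((N : ℕ) : ℝ≥0∞)⁻¹ = ENNReal.ofReal ((N : ℝ)⁻¹) by
        rw [ENNReal.ofReal_inv_of_pos (by exact_mod_cast hN), ENNReal.ofReal_natCast],
      ← ENNReal.ofReal_mul (by positivity)]
  -- the optimal value
  -- evaluation for the candidate policy
  have hcandL2 : ∀ i : ℕ, MemLp (fun ω => (Q / (R + Q)) * φ (x 0 ω + z 0 ω)) 2 P :=
    fun _ => hφL2.const_mul _
  have hAcand : ∫ ω, ((Q / (R + Q)) * φ (x 0 ω + z 0 ω)) ^ 2 ∂P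
      = (Q / (R + Q)) ^ 2 * ∫ ω, (φ (x 0 ω + z 0 ω)) ^ 2 ∂P := by
    simp_rw [mul_pow]
    exact integral_const_mul _ _
  have hBcand : ∫ ω, ((Q / (R + Q)) * φ (x 0 ω + z 0 ω)) * x 0 ω ∂P
      = (Q / (R + Q)) * ∫ ω, (φ (x 0 ω + z 0 ω)) ^ 2 ∂P := by
    simp_rw [mul_assoc]
    rw [integral_const_mul, hBφ]
  have hcandJ : ∀ N : ℕ, 0 < N →
      lqCostN P x z R Q (fun _ => fun vv => (Q / (R + Q)) * φ vv) N
      = ENNReal.ofReal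
          ((R + Q) * ((Q / (R + Q)) ^ 2 * ∫ ω, (φ (x 0 ω + z 0 ω)) ^ 2 ∂P)
            - 2 * Q * (1 + (N : ℝ)⁻¹)
              * ((Q / (R + Q)) * ∫ ω, (φ (x 0 ω + z 0 ω)) ^ 2 ∂P)
            + Q * (1 + 3 * (N : ℝ)⁻¹) * (∫ ω, (x 0 ω) ^ 2 ∂P)) := by
    intro N hN
    have hN0 : (N : ℝ) ≠ 0 := Nat.cast_ne_zero.mpr hN.ne'
    rw [hJN _ (fun _ => hφ_meas.const_mul _) hcandL2 N hN]
    congr 1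
    rw [Finset.sum_congr rfl (fun i _ => by rw [hAcand, hBcand]), Finset.sum_const,
      Finset.card_range, nsmul_eq_mul, inv_mul_cancel_left₀ hN0]
  -- convergence of the candidate cost
  have hcand_eq : lqCost P x z R Q (fun _ => fun vv => (Q / (R + Q)) * φ vv)
      = ENNReal.ofReal (Q * (∫ ω, (x 0 ω) ^ 2 ∂P)
          - Q ^ 2 * (∫ ω, (φ (x 0 ω + z 0 ω)) ^ 2 ∂P) / (R + Q)) := by
    apply Filter.Tendsto.limsup_eq
    have hcont : Continuous (fun t : ℝ =>
        (R + Q) * ((Q / (R + Q)) ^ 2 * ∫ ω, (φ (x 0 ω + z 0 ω)) ^ 2 ∂P)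
          - 2 * Q * (1 + t) * ((Q / (R + Q)) * ∫ ω, (φ (x 0 ω + z 0 ω)) ^ 2 ∂P)
          + Q * (1 + 3 * t) * (∫ ω, (x 0 ω) ^ 2 ∂P)) := by fun_prop
    have hreal : Tendsto (fun N : ℕ =>
        (R + Q) * ((Q / (R + Q)) ^ 2 * ∫ ω, (φ (x 0 ω + z 0 ω)) ^ 2 ∂P)
          - 2 * Q * (1 + (N : ℝ)⁻¹) * ((Q / (R + Q)) * ∫ ω, (φ (x 0 ω + z 0 ω)) ^ 2 ∂P)
          + Q * (1 + 3 * (N : ℝ)⁻¹) * (∫ ω, (x 0 ω) ^ 2 ∂P)) atTop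
        (𝓝 (Q * (∫ ω, (x 0 ω) ^ 2 ∂P)
          - Q ^ 2 * (∫ ω, (φ (x 0 ω + z 0 ω)) ^ 2 ∂P) / (R + Q))) := by
      rw [show Q * (∫ ω, (x 0 ω) ^ 2 ∂P)
            - Q ^ 2 * (∫ ω, (φ (x 0 ω + z 0 ω)) ^ 2 ∂P) / (R + Q)
          = (R + Q) * ((Q / (R + Q)) ^ 2 * ∫ ω, (φ (x 0 ω + z 0 ω)) ^ 2 ∂P)
            - 2 * Q * (1 + (0:ℝ)) * ((Q / (R + Q)) * ∫ ω, (φ (x 0 ω + z 0 ω)) ^ 2 ∂P)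
            + Q * (1 + 3 * (0:ℝ)) * (∫ ω, (x 0 ω) ^ 2 ∂P) by field_simp; ring]
      exact ((hcont.tendsto 0).comp tendsto_inv_atTop_nhds_zero_nat).congr fun N => rfl
    refine Filter.Tendsto.congr' ?_ (ENNReal.tendsto_ofReal hreal)
    filter_upwards [eventually_gt_atTop 0] with N hN
    exact (hcandJ N hN).symm
  -- the lower bound for arbitrary measurable policies
  have hlower : ∀ (γ : ℕ → ℝ → ℝ), (∀ i, Measurable (γ i)) →
      ENNReal.ofReal (Q * (∫ ω, (x 0 ω) ^ 2 ∂P)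
        - Q ^ 2 * (∫ ω, (φ (x 0 ω + z 0 ω)) ^ 2 ∂P) / (R + Q)) ≤ lqCost P x z R Q γ := by
    intro γ hγm
    by_cases hall : ∀ i, MemLp (fun ω => γ i (x 0 ω + z 0 ω)) 2 P
    · have hlb : ∀ᶠ N : ℕ in atTop,
          ENNReal.ofReal (Q * (1 + 3 * (N : ℝ)⁻¹) * (∫ ω, (x 0 ω) ^ 2 ∂P)
            - (Q * (1 + (N : ℝ)⁻¹)) ^ 2 * (∫ ω, (φ (x 0 ω + z 0 ω)) ^ 2 ∂P) / (R + Q))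
          ≤ lqCostN P x z R Q γ N := by
        filter_upwards [eventually_gt_atTop 0] with N hN
        rw [hJN γ hγm hall N hN]
        apply ENNReal.ofReal_le_ofReal
        have hNR : (0:ℝ) < N := by exact_mod_cast hN
        have hterm_lb : ∀ i ∈ Finset.range N,
            Q * (1 + 3 * (N : ℝ)⁻¹) * (∫ ω, (x 0 ω) ^ 2 ∂P)
              - (Q * (1 + (N : ℝ)⁻¹)) ^ 2 * (∫ ω, (φ (x 0 ω + z 0 ω)) ^ 2 ∂P) / (R + Q)
            ≤ (R + Q) * (∫ ω, (γ i (x 0 ω + z 0 ω)) ^ 2 ∂P)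
              - 2 * Q * (1 + (N : ℝ)⁻¹) * (∫ ω, γ i (x 0 ω + z 0 ω) * x 0 ω ∂P)
              + Q * (1 + 3 * (N : ℝ)⁻¹) * (∫ ω, (x 0 ω) ^ 2 ∂P) := by
          intro i _
          rw [hpull (γ i) (hγm i) (hall i)]
          have hk := hquad (γ i) (hγm i) (hall i) ((Q * (1 + (N : ℝ)⁻¹)) / (R + Q))
          have h2 : 0 ≤ (R + Q) * ((∫ ω, (γ i (x 0 ω + z 0 ω)) ^ 2 ∂P)
              - 2 * ((Q * (1 + (N : ℝ)⁻¹)) / (R + Q))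
                * (∫ ω, γ i (x 0 ω + z 0 ω) * φ (x 0 ω + z 0 ω) ∂P)
              + ((Q * (1 + (N : ℝ)⁻¹)) / (R + Q)) ^ 2
                * ∫ ω, (φ (x 0 ω + z 0 ω)) ^ 2 ∂P) := mul_nonneg hRQ.le hk
          have h3 : (R + Q) * ((∫ ω, (γ i (x 0 ω + z 0 ω)) ^ 2 ∂P)
              - 2 * ((Q * (1 + (N : ℝ)⁻¹)) / (R + Q))
                * (∫ ω, γ i (x 0 ω + z 0 ω) * φ (x 0 ω + z 0 ω) ∂P)
              + ((Q * (1 + (N : ℝ)⁻¹)) / (R + Q)) ^ 2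
                * ∫ ω, (φ (x 0 ω + z 0 ω)) ^ 2 ∂P)
              = (R + Q) * (∫ ω, (γ i (x 0 ω + z 0 ω)) ^ 2 ∂P)
                - 2 * Q * (1 + (N : ℝ)⁻¹)
                  * (∫ ω, γ i (x 0 ω + z 0 ω) * φ (x 0 ω + z 0 ω) ∂P)
                + (Q * (1 + (N : ℝ)⁻¹)) ^ 2
                  * (∫ ω, (φ (x 0 ω + z 0 ω)) ^ 2 ∂P) / (R + Q) := by
            field_simp
          rw [h3] at h2
          linarith
        have hsum := Finset.card_nsmul_le_sum (Finset.range N) _ _ hterm_lb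
        rw [Finset.card_range, nsmul_eq_mul] at hsum
        calc Q * (1 + 3 * (N : ℝ)⁻¹) * (∫ ω, (x 0 ω) ^ 2 ∂P)
              - (Q * (1 + (N : ℝ)⁻¹)) ^ 2 * (∫ ω, (φ (x 0 ω + z 0 ω)) ^ 2 ∂P) / (R + Q)
            = (N : ℝ)⁻¹ * ((N : ℝ) * (Q * (1 + 3 * (N : ℝ)⁻¹) * (∫ ω, (x 0 ω) ^ 2 ∂P)
              - (Q * (1 + (N : ℝ)⁻¹)) ^ 2 * (∫ ω, (φ (x 0 ω + z 0 ω)) ^ 2 ∂P) / (R + Q))) :=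
              (inv_mul_cancel_left₀ hNR.ne' _).symm
          _ ≤ (N : ℝ)⁻¹ * ∑ i ∈ Finset.range N,
              ((R + Q) * (∫ ω, (γ i (x 0 ω + z 0 ω)) ^ 2 ∂P)
                - 2 * Q * (1 + (N : ℝ)⁻¹) * (∫ ω, γ i (x 0 ω + z 0 ω) * x 0 ω ∂P)
                + Q * (1 + 3 * (N : ℝ)⁻¹) * (∫ ω, (x 0 ω) ^ 2 ∂P)) :=
              mul_le_mul_of_nonneg_left hsum (inv_nonneg.mpr hNR.le)
      have hcont : Continuous (fun t : ℝ =>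
          Q * (1 + 3 * t) * (∫ ω, (x 0 ω) ^ 2 ∂P)
            - (Q * (1 + t)) ^ 2 * (∫ ω, (φ (x 0 ω + z 0 ω)) ^ 2 ∂P) / (R + Q)) := by
        fun_prop
      have hreal : Tendsto (fun N : ℕ =>
          Q * (1 + 3 * (N : ℝ)⁻¹) * (∫ ω, (x 0 ω) ^ 2 ∂P)
            - (Q * (1 + (N : ℝ)⁻¹)) ^ 2 * (∫ ω, (φ (x 0 ω + z 0 ω)) ^ 2 ∂P) / (R + Q)) atTop
          (𝓝 (Q * (∫ ω, (x 0 ω) ^ 2 ∂P)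
            - Q ^ 2 * (∫ ω, (φ (x 0 ω + z 0 ω)) ^ 2 ∂P) / (R + Q))) := by
        rw [show Q * (∫ ω, (x 0 ω) ^ 2 ∂P)
              - Q ^ 2 * (∫ ω, (φ (x 0 ω + z 0 ω)) ^ 2 ∂P) / (R + Q)
            = Q * (1 + 3 * (0:ℝ)) * (∫ ω, (x 0 ω) ^ 2 ∂P)
              - (Q * (1 + (0:ℝ))) ^ 2 * (∫ ω, (φ (x 0 ω + z 0 ω)) ^ 2 ∂P) / (R + Q) by
          ring]
        exact ((hcont.tendsto 0).comp tendsto_inv_atTop_nhds_zero_nat).congr fun N => rfl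
      calc ENNReal.ofReal (Q * (∫ ω, (x 0 ω) ^ 2 ∂P)
            - Q ^ 2 * (∫ ω, (φ (x 0 ω + z 0 ω)) ^ 2 ∂P) / (R + Q))
          = liminf (fun N : ℕ => ENNReal.ofReal
              (Q * (1 + 3 * (N : ℝ)⁻¹) * (∫ ω, (x 0 ω) ^ 2 ∂P)
                - (Q * (1 + (N : ℝ)⁻¹)) ^ 2
                  * (∫ ω, (φ (x 0 ω + z 0 ω)) ^ 2 ∂P) / (R + Q))) atTop :=
            ((ENNReal.tendsto_ofReal hreal).liminf_eq).symm
        _ ≤ liminf (lqCostN P x z R Q γ) atTop := liminf_le_liminf hlb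
        _ ≤ limsup (lqCostN P x z R Q γ) atTop := liminf_le_limsup
    · push_neg at hall
      obtain ⟨i0, hi0⟩ := hall
      have hγmeas0 : Measurable (fun ω => γ i0 (x 0 ω + z 0 ω)) :=
        (hγm i0).comp ((hx_meas 0).add (hz_meas 0))
      have htop : ∫⁻ ω, ENNReal.ofReal ((γ i0 (x 0 ω + z 0 ω)) ^ 2) ∂P = ⊤ := by
        by_contra h
        have hfin : HasFiniteIntegral (fun ω => (γ i0 (x 0 ω + z 0 ω)) ^ 2) P :=
          (hasFiniteIntegral_iff_ofReal
            (Filter.Eventually.of_forall fun ω => sq_nonneg _)).mpr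
            (lt_top_iff_ne_top.mpr h)
        exact hi0 ((memLp_two_iff_integrable_sq hγmeas0.aestronglyMeasurable).mpr
          ⟨(hγmeas0.pow_const 2).aestronglyMeasurable, hfin⟩)
      have htopi : ∫⁻ ω, ENNReal.ofReal ((γ i0 (x i0 ω + z i0 ω)) ^ 2) ∂P = ⊤ := by
        rw [hTlint i0 (fun p => ENNReal.ofReal ((γ i0 (p.1 + p.2)) ^ 2))
          ((((hγm i0).comp (measurable_fst.add measurable_snd)).pow_const 2).ennreal_ofReal)]
        exact htop
      have hev : ∀ᶠ N in atTop, lqCostN P x z R Q γ N = ⊤ := by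
        filter_upwards [eventually_gt_atTop i0] with N hNi
        simp only [lqCostN]
        have hmeasi : Measurable fun ω => ENNReal.ofReal ((γ i0 (x i0 ω + z i0 ω)) ^ 2) :=
          ((((hγm i0).comp ((hx_meas i0).add (hz_meas i0))).pow_const 2)).ennreal_ofReal
        have h1 : ∫⁻ ω, ENNReal.ofReal (R * (γ i0 (x i0 ω + z i0 ω)) ^ 2) ∂P = ⊤ := by
          simp_rw [ENNReal.ofReal_mul hR.le]
          rw [lintegral_const_mul _ hmeasi, htopi]
          exact ENNReal.mul_top (by simp [ENNReal.ofReal_eq_zero, not_le, hR])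
        have h2 : (⊤ : ℝ≥0∞) ≤ ∫⁻ ω, ENNReal.ofReal (∑ i ∈ Finset.range N,
            (R * (γ i (x i ω + z i ω)) ^ 2 +
              Q * (γ i (x i ω + z i ω) - x i ω
                - (N : ℝ)⁻¹ * ∑ k ∈ Finset.range N, x k ω) ^ 2)) ∂P := by
          rw [← h1]
          refine lintegral_mono fun ω => ENNReal.ofReal_le_ofReal ?_
          calc R * (γ i0 (x i0 ω + z i0 ω)) ^ 2
              ≤ R * (γ i0 (x i0 ω + z i0 ω)) ^ 2 +
                Q * (γ i0 (x i0 ω + z i0 ω) - x i0 ω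
                  - (N : ℝ)⁻¹ * ∑ k ∈ Finset.range N, x k ω) ^ 2 :=
                le_add_of_nonneg_right (mul_nonneg hQ (sq_nonneg _))
            _ ≤ ∑ i ∈ Finset.range N,
                (R * (γ i (x i ω + z i ω)) ^ 2 +
                  Q * (γ i (x i ω + z i ω) - x i ω
                    - (N : ℝ)⁻¹ * ∑ k ∈ Finset.range N, x k ω) ^ 2) :=
                Finset.single_le_sum (f := fun i =>
                    R * (γ i (x i ω + z i ω)) ^ 2 +
                      Q * (γ i (x i ω + z i ω) - x i ω
                        - (N : ℝ)⁻¹ * ∑ k ∈ Finset.range N, x k ω) ^ 2)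
                  (fun i _ =>
                    add_nonneg (mul_nonneg hR.le (sq_nonneg _))
                      (mul_nonneg hQ (sq_nonneg _))) (Finset.mem_range.mpr hNi)
        rw [top_le_iff.mp h2]
        exact ENNReal.mul_top (ENNReal.inv_ne_zero.mpr (ENNReal.natCast_ne_top N))
      have hlim : limsup (lqCostN P x z R Q γ) atTop = ⊤ := by
        rw [limsup_congr hev]
        exact limsup_const ⊤
      show _ ≤ limsup (lqCostN P x z R Q γ) atTop
      rw [hlim]
      exact le_top
  refine le_antisymm ?_ ?_
  · rw [hcand_eq]
    exact le_iInf fun γ => hlower γ.1 γ.2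
  · exact iInf_le (fun γ : {γ : ℕ → ℝ → ℝ // ∀ i, Measurable (γ i)} => lqCost P x z R Q γ.1)
      ⟨fun _ => fun vv => (Q / (R + Q)) * φ vv, fun _ => hφ_meas.const_mul _⟩
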